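/- Let H₁ and H₂ be finite-dimensional complex inner product spaces and let f, g : H₁ →ₗ[ℂ] H₂ be linear maps with TensorProduct.map f (LinearMap.adjoint f) = TensorProduct.map g (LinearMap.adjoint g). Then, setting s := LinearMap.trace ℂ H₁ ((LinearMap.adjoint f) ∘ₗ f) and t := LinearMap.trace ℂ H₁ ((LinearMap.adjoint g) ∘ₗ f), one has s • f = t • g and s * (starRingEnd ℂ s) = t * (starRingEnd ℂ t). -/

import Mathlib

lemma trace_inner_aux {H : Type*} [NormedAddCommGroup H] [InnerProductSpace ℂ H]
    [FiniteDimensional ℂ H] {ι : Type*} [Fintype ι] [DecidableEq ι]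
    (b : OrthonormalBasis ι ℂ H) (T : H →ₗ[ℂ] H) :
    LinearMap.trace ℂ H T = ∑ i, (inner ℂ (b i) (T (b i)) : ℂ) := by
  rw [LinearMap.trace_eq_matrix_trace ℂ b.toBasis, Matrix.trace]
  simp [Matrix.diag, LinearMap.toMatrix_apply, OrthonormalBasis.coe_toBasis,
    OrthonormalBasis.coe_toBasis_repr_apply, OrthonormalBasis.repr_apply_apply]

theorem stmt_1 {H₁ H₂ : Type*}
    [NormedAddCommGroup H₁] [InnerProductSpace ℂ H₁] [FiniteDimensional ℂ H₁]
    [NormedAddCommGroup H₂] [InnerProductSpace ℂ H₂] [FiniteDimensional ℂ H₂]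
    (f g : H₁ →ₗ[ℂ] H₂)
    (h : TensorProduct.map f (LinearMap.adjoint f) =
      TensorProduct.map g (LinearMap.adjoint g)) :
    (LinearMap.trace ℂ H₁ ((LinearMap.adjoint f) ∘ₗ f)) • f =
      (LinearMap.trace ℂ H₁ ((LinearMap.adjoint g) ∘ₗ f)) • g ∧
    (LinearMap.trace ℂ H₁ ((LinearMap.adjoint f) ∘ₗ f)) *
        (starRingEnd ℂ) (LinearMap.trace ℂ H₁ ((LinearMap.adjoint f) ∘ₗ f)) =
      (LinearMap.trace ℂ H₁ ((LinearMap.adjoint g) ∘ₗ f)) *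
        (starRingEnd ℂ) (LinearMap.trace ℂ H₁ ((LinearMap.adjoint g) ∘ₗ f)) := by
  have key : ∀ (x x' : H₁) (y : H₂),
      (inner ℂ (f x') y : ℂ) • f x = (inner ℂ (g x') y : ℂ) • g x := by
    intro x x' y
    have h1 : f x ⊗ₜ[ℂ] (LinearMap.adjoint f) y = g x ⊗ₜ[ℂ] (LinearMap.adjoint g) y := by
      have := congrFun (congrArg DFunLike.coe h) (x ⊗ₜ[ℂ] y)
      simpa [TensorProduct.map_tmul] using this
    have h2 := congrArg (fun z => (TensorProduct.rid ℂ H₂)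
      ((TensorProduct.map (LinearMap.id (M := H₂)) ((innerSL ℂ x').toLinearMap)) z)) h1
    simpa [TensorProduct.map_tmul, TensorProduct.rid_tmul,
      LinearMap.adjoint_inner_right] using h2
  set b := stdOrthonormalBasis ℂ H₁
  have hs : LinearMap.trace ℂ H₁ ((LinearMap.adjoint f) ∘ₗ f)
      = ∑ i, (inner ℂ (f (b i)) (f (b i)) : ℂ) := by
    rw [trace_inner_aux b]
    simp [LinearMap.adjoint_inner_right]
  have ht : LinearMap.trace ℂ H₁ ((LinearMap.adjoint g) ∘ₗ f)
      = ∑ i, (inner ℂ (g (b i)) (f (b i)) : ℂ) := by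
    rw [trace_inner_aux b]
    simp [LinearMap.adjoint_inner_right]
  have main : ∀ x : H₁,
      (LinearMap.trace ℂ H₁ ((LinearMap.adjoint f) ∘ₗ f)) • f x =
      (LinearMap.trace ℂ H₁ ((LinearMap.adjoint g) ∘ₗ f)) • g x := by
    intro x
    rw [hs, ht, Finset.sum_smul, Finset.sum_smul]
    exact Finset.sum_congr rfl fun i _ => key x (b i) (f (b i))
  constructor
  · ext x
    simpa using main x
  · -- scalar identity
    have key2 : ∀ (x x' : H₁) (y z : H₂),
        (inner ℂ (f x') y : ℂ) * inner ℂ z (f x) = (inner ℂ (g x') y : ℂ) * inner ℂ z (g x) := by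
      intro x x' y z
      have := congrArg (fun w => (inner ℂ z w : ℂ)) (key x x' y)
      simpa [inner_smul_right] using this
    have hsc : (starRingEnd ℂ) (LinearMap.trace ℂ H₁ ((LinearMap.adjoint f) ∘ₗ f))
        = ∑ j, (inner ℂ (f (b j)) (f (b j)) : ℂ) := by
      rw [hs, map_sum]
      exact Finset.sum_congr rfl fun j _ => inner_conj_symm _ _
    have htc : (starRingEnd ℂ) (LinearMap.trace ℂ H₁ ((LinearMap.adjoint g) ∘ₗ f))
        = ∑ j, (inner ℂ (f (b j)) (g (b j)) : ℂ) := by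
      rw [ht, map_sum]
      exact Finset.sum_congr rfl fun j _ => inner_conj_symm _ _
    rw [hsc, htc, hs, ht, Finset.sum_mul_sum, Finset.sum_mul_sum]
    exact Finset.sum_congr rfl fun i _ => Finset.sum_congr rfl fun j _ =>
      key2 (b j) (b i) (f (b i)) (f (b j))
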